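/- Let G be a group generated by S ∪ {u} with S symmetric (S = S⁻¹). Let W₀ ⊆ G be a subgroup and set W_n = uⁿ W₀ u^{-n} for n ∈ ℤ. Assume: (1) for every n ≥ 0, S normalizes W_n; (2) u W₀ u⁻¹ ⊆ W₀; (3) u S u⁻¹ is contained in the smallest subgroup containing S that is stable under conjugation by u⁻¹. Then the normal closure of W₀ in G equals the ascending union ⋃_{n≥0} u^{-n} W₀ uⁿ. -/

import Mathlib

def uMinusSubgroup {G : Type*} [Group G] (u : G) (S : Set G) : Subgroup G :=
  sInf {H : Subgroup G | S ⊆ H ∧ ∀ x ∈ H, u⁻¹ * x * u ∈ H}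

theorem stmt10 {G : Type*} [Group G] (S : Set G) (hS : S⁻¹ = S) (u : G)
    (hgen : Subgroup.closure (S ∪ {u}) = ⊤) (W₀ : Subgroup G)
    (h1 : ∀ (n : ℕ), ∀ s ∈ S,
      (W₀.map (MulAut.conj (u ^ n)).toMonoidHom).map (MulAut.conj s).toMonoidHom =
        W₀.map (MulAut.conj (u ^ n)).toMonoidHom)
    (h2 : W₀.map (MulAut.conj u).toMonoidHom ≤ W₀)
    (h3 : ∀ s ∈ S, u * s * u⁻¹ ∈ uMinusSubgroup u S) :
    Subgroup.normalClosure (W₀ : Set G) =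
      ⨆ n : ℕ, W₀.map (MulAut.conj ((u ^ n)⁻¹)).toMonoidHom := by
  classical
  set K := uMinusSubgroup u S with hK
  have hmemK : ∀ x : G, x ∈ K ↔ ∀ H ∈ {H : Subgroup G | S ⊆ H ∧ ∀ x ∈ H, u⁻¹ * x * u ∈ H}, x ∈ H := by
    intro x; rw [hK, uMinusSubgroup, Subgroup.mem_sInf]
  have hKS : ∀ s ∈ S, s ∈ K := fun s hs => (hmemK s).mpr (fun H hH => hH.1 hs)
  have hKu : ∀ x ∈ K, u⁻¹ * x * u ∈ K := fun x hx =>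
    (hmemK _).mpr (fun H hH => hH.2 x ((hmemK x).mp hx H hH))
  -- K is stable under conjugation by u as well
  have hKuu : ∀ x ∈ K, u * x * u⁻¹ ∈ K := by
    let H' : Subgroup G :=
      { carrier := {x | x ∈ K ∧ u * x * u⁻¹ ∈ K}
        one_mem' := ⟨one_mem K, by simpa using one_mem K⟩
        mul_mem' := by
          rintro a b ⟨ha, ha'⟩ ⟨hb, hb'⟩
          refine ⟨mul_mem ha hb, ?_⟩
          have h : u * (a * b) * u⁻¹ = (u * a * u⁻¹) * (u * b * u⁻¹) := by group
          rw [h]; exact mul_mem ha' hb'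
        inv_mem' := by
          rintro a ⟨ha, ha'⟩
          refine ⟨inv_mem ha, ?_⟩
          have h : u * a⁻¹ * u⁻¹ = (u * a * u⁻¹)⁻¹ := by group
          rw [h]; exact inv_mem ha' }
    have hle : K ≤ H' := by
      apply sInf_le
      constructor
      · intro s hs; exact ⟨hKS s hs, h3 s hs⟩
      · rintro x ⟨hx, hx'⟩
        refine ⟨hKu x hx, ?_⟩
        have h : u * (u⁻¹ * x * u) * u⁻¹ = x := by group
        rw [h]; exact hx
    exact fun x hx => (hle hx).2
  have husu : ∀ n : ℕ, ∀ s ∈ S, u ^ n * s * (u ^ n)⁻¹ ∈ K := by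
    intro n s hs
    induction n with
    | zero => simpa using hKS s hs
    | succ m ih =>
      have h : u ^ (m + 1) * s * (u ^ (m + 1))⁻¹ = u * (u ^ m * s * (u ^ m)⁻¹) * u⁻¹ := by
        rw [pow_succ']; group
      rw [h]; exact hKuu _ ih
  -- the subgroups Wₙ = uⁿ W₀ u⁻ⁿ and membership lemmas
  set Wn : ℕ → Subgroup G := fun n => W₀.map (MulAut.conj (u ^ n)).toMonoidHom with hWndef
  have hWn : ∀ n : ℕ, ∀ x : G, x ∈ Wn n ↔ (u ^ n)⁻¹ * x * u ^ n ∈ W₀ := by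
    intro n x
    rw [show Wn n = W₀.map (MulAut.conj (u ^ n)).toMonoidHom from rfl,
      Subgroup.mem_map_equiv, MulAut.conj_symm_apply]
  have hs_norm : ∀ n : ℕ, ∀ s ∈ S, ∀ x : G, x ∈ Wn n ↔ s * x * s⁻¹ ∈ Wn n := by
    intro n s hs x
    have key : (Wn n).map (MulAut.conj s).toMonoidHom = Wn n := h1 n s hs
    constructor
    · intro hx
      have h := Subgroup.mem_map_of_mem (MulAut.conj s).toMonoidHom hx
      rw [key] at h
      simpa [MulAut.conj_apply] using h
    · intro hx
      rw [← key, Subgroup.mem_map_equiv, MulAut.conj_symm_apply] at hx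
      have h : s⁻¹ * (s * x * s⁻¹) * s = x := by group
      rwa [h] at hx
  have hshift : ∀ n : ℕ, ∀ y : G, y ∈ Wn n ↔ u * y * u⁻¹ ∈ Wn (n + 1) := by
    intro n y
    rw [hWn, hWn]
    have h : (u ^ (n + 1))⁻¹ * (u * y * u⁻¹) * u ^ (n + 1) = (u ^ n)⁻¹ * y * u ^ n := by
      rw [pow_succ']; group
    rw [h]
  -- every element of K normalizes W₀
  have hKnorm : ∀ k ∈ K, ∀ x : G, x ∈ W₀ ↔ k * x * k⁻¹ ∈ W₀ := by
    have hle : K ≤ ⨅ n : ℕ, Subgroup.normalizer (Wn n : Set G) := by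
      apply sInf_le
      constructor
      · intro s hs
        rw [SetLike.mem_coe, Subgroup.mem_iInf]
        intro n
        rw [Subgroup.mem_normalizer_iff]
        exact fun x => hs_norm n s hs x
      · intro x hx
        rw [Subgroup.mem_iInf] at hx ⊢
        intro n
        rw [Subgroup.mem_normalizer_iff]
        intro y
        have hxn := Subgroup.mem_normalizer_iff.mp (hx (n + 1))
        have e1 : y ∈ Wn n ↔ x * (u * y * u⁻¹) * x⁻¹ ∈ Wn (n + 1) := by
          rw [hshift n y]; exact hxn (u * y * u⁻¹)
        have e2 : x * (u * y * u⁻¹) * x⁻¹ ∈ Wn (n + 1) ↔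
            u⁻¹ * x * u * y * (u⁻¹ * x * u)⁻¹ ∈ Wn n := by
          rw [hshift n (u⁻¹ * x * u * y * (u⁻¹ * x * u)⁻¹)]
          have h : u * (u⁻¹ * x * u * y * (u⁻¹ * x * u)⁻¹) * u⁻¹ =
              x * (u * y * u⁻¹) * x⁻¹ := by group
          rw [h]
        rw [e1, e2]
    intro k hk x
    have h0 := Subgroup.mem_normalizer_iff.mp (Subgroup.mem_iInf.mp (hle hk) 0) x
    have hx0 : ∀ z : G, z ∈ Wn 0 ↔ z ∈ W₀ := by
      intro z; rw [hWn]; simp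
    rw [hx0, hx0] at h0
    exact h0
  -- membership in the target iSup
  set T : Subgroup G := ⨆ n : ℕ, W₀.map (MulAut.conj ((u ^ n)⁻¹)).toMonoidHom with hTdef
  have hTn : ∀ n : ℕ, ∀ x : G,
      x ∈ W₀.map (MulAut.conj ((u ^ n)⁻¹)).toMonoidHom ↔ u ^ n * x * (u ^ n)⁻¹ ∈ W₀ := by
    intro n x
    rw [Subgroup.mem_map_equiv, MulAut.conj_symm_apply, inv_inv]
  have h2' : ∀ x ∈ W₀, u * x * u⁻¹ ∈ W₀ := by
    intro x hx
    have := h2 (Subgroup.mem_map_of_mem (MulAut.conj u).toMonoidHom hx)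
    simpa [MulAut.conj_apply] using this
  have hmono : Monotone (fun n : ℕ => W₀.map (MulAut.conj ((u ^ n)⁻¹)).toMonoidHom) := by
    apply monotone_nat_of_le_succ
    intro n x hx
    rw [hTn] at hx ⊢
    have h : u ^ (n + 1) * x * (u ^ (n + 1))⁻¹ = u * (u ^ n * x * (u ^ n)⁻¹) * u⁻¹ := by
      rw [pow_succ']; group
    rw [h]; exact h2' _ hx
  have hT : ∀ x : G, x ∈ T ↔ ∃ n : ℕ, u ^ n * x * (u ^ n)⁻¹ ∈ W₀ := by
    intro x
    rw [hTdef, Subgroup.mem_iSup_of_directed hmono.directed_le]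
    exact exists_congr fun n => hTn n x
  -- T is normal
  have hSconj : ∀ s ∈ S, ∀ y : G, y ∈ T → s * y * s⁻¹ ∈ T := by
    intro s hs y hy
    rw [hT] at hy ⊢
    obtain ⟨n, hn⟩ := hy
    refine ⟨n, ?_⟩
    have h : u ^ n * (s * y * s⁻¹) * (u ^ n)⁻¹ =
        (u ^ n * s * (u ^ n)⁻¹) * (u ^ n * y * (u ^ n)⁻¹) * (u ^ n * s * (u ^ n)⁻¹)⁻¹ := by
      group
    rw [h]
    exact ((hKnorm _ (husu n s hs) _).mp hn)
  have hSmem : ∀ s ∈ S, s⁻¹ ∈ S := by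
    intro s hs
    rw [← hS]
    simpa using hs
  have hnt : Subgroup.normalizer (T : Set G) = ⊤ := by
    rw [eq_top_iff, ← hgen, Subgroup.closure_le]
    rintro g (hg | hg)
    · rw [SetLike.mem_coe, Subgroup.mem_normalizer_iff]
      intro y
      constructor
      · exact fun hy => hSconj g hg y hy
      · intro hy
        have := hSconj g⁻¹ (hSmem g hg) _ hy
        have h : g⁻¹ * (g * y * g⁻¹) * g⁻¹⁻¹ = y := by group
        rwa [h] at this
    · simp only [Set.mem_singleton_iff] at hg
      subst hg
      rw [SetLike.mem_coe, Subgroup.mem_normalizer_iff]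
      intro y
      rw [hT, hT]
      constructor
      · rintro ⟨n, hn⟩
        refine ⟨n, ?_⟩
        have h : g ^ n * (g * y * g⁻¹) * (g ^ n)⁻¹ = g * (g ^ n * y * (g ^ n)⁻¹) * g⁻¹ := by
          group
        rw [h]; exact h2' _ hn
      · rintro ⟨n, hn⟩
        refine ⟨n + 1, ?_⟩
        have h : g ^ (n + 1) * y * (g ^ (n + 1))⁻¹ = g ^ n * (g * y * g⁻¹) * (g ^ n)⁻¹ := by
          rw [pow_succ']; group
        rw [h]; exact hn
  have hTnormal : T.Normal := Subgroup.normalizer_eq_top_iff.mp hnt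
  apply le_antisymm
  · haveI := hTnormal
    apply Subgroup.normalClosure_le_normal
    intro x hx
    rw [SetLike.mem_coe, hT]
    exact ⟨0, by simpa using hx⟩
  · apply iSup_le
    intro n x hx
    rw [hTn] at hx
    have hmem := Subgroup.subset_normalClosure (s := (W₀ : Set G)) hx
    haveI : (Subgroup.normalClosure (W₀ : Set G)).Normal := Subgroup.normalClosure_normal
    have := this.conj_mem _ hmem (u ^ n)⁻¹
    have h : (u ^ n)⁻¹ * (u ^ n * x * (u ^ n)⁻¹) * (u ^ n)⁻¹⁻¹ = x := by group
    rwa [h] at this
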